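/- For discrete random variables Z, G, G*, Y with Z = f(G*), one has I(Z;G) − I(G;G*) ≤ I(Z;Y); hence maximizing I(Z;G) while minimizing I(G;G*) yields a lower bound on I(Z;Y). -/

import Mathlib

open Finset

section myaux

lemma my_sub_le_mul_log {x y : ℝ} (hx : 0 ≤ x) (hy : 0 ≤ y) (hxy : y = 0 → x = 0) :
    x - y ≤ x * Real.log (x / y) := by
  rcases eq_or_lt_of_le hx with h | h
  · simp [← h]; linarith
  · have hy' : 0 < y := lt_of_le_of_ne hy (fun h0 => by simp [hxy h0.symm] at h)
    have hlog : Real.log (y / x) ≤ y / x - 1 :=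
      Real.log_le_sub_one_of_pos (by positivity)
    have : Real.log (x / y) = - Real.log (y / x) := by
      rw [← Real.log_inv]; congr 1; field_simp
    rw [this]
    have := mul_le_mul_of_nonneg_left hlog hx
    calc x - y = x * (1 - y / x) := by field_simp
    _ ≤ x * (- Real.log (y / x)) := by nlinarith
    _ = x * -Real.log (y / x) := rfl

lemma my_log_sum {ι : Type*} (s : Finset ι) (a b : ι → ℝ)
    (ha : ∀ i ∈ s, 0 ≤ a i) (hb : ∀ i ∈ s, 0 ≤ b i)
    (hab : ∀ i ∈ s, b i = 0 → a i = 0) :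
    (∑ i ∈ s, a i) * Real.log ((∑ i ∈ s, a i) / (∑ i ∈ s, b i)) ≤
      ∑ i ∈ s, a i * Real.log (a i / b i) := by
  set A := ∑ i ∈ s, a i with hA
  set B := ∑ i ∈ s, b i with hB
  have hA0 : 0 ≤ A := Finset.sum_nonneg ha
  rcases eq_or_lt_of_le hA0 with h | hApos
  · have hz : ∀ i ∈ s, a i = 0 := by
      intro i hi
      exact le_antisymm (by
        have := Finset.single_le_sum ha hi
        linarith) (ha i hi)
    have h2 : ∑ i ∈ s, a i * Real.log (a i / b i) = 0 :=
      Finset.sum_eq_zero (fun i hi => by rw [hz i hi]; ring)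
    rw [← h, h2]
    simp
  · have hB0 : 0 ≤ B := Finset.sum_nonneg hb
    have hBpos : 0 < B := by
      rcases eq_or_lt_of_le hB0 with h | h
      · exfalso
        have hz : ∀ i ∈ s, b i = 0 := by
          intro i hi
          exact le_antisymm (by have := Finset.single_le_sum hb hi; linarith) (hb i hi)
        have : A = 0 := Finset.sum_eq_zero (fun i hi => hab i hi (hz i hi))
        linarith
      · exact h
    -- per-term bound
    have key : ∀ i ∈ s, a i - b i * A / B ≤ a i * Real.log (a i / b i) - a i * (Real.log A - Real.log B) := by
      intro i hi
      rcases eq_or_lt_of_le (ha i hi) with h | hai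
      · have hby : 0 ≤ b i * A / B := by
          have := hb i hi
          positivity
        rw [← h]
        simp
        linarith
      · have hbi : 0 < b i := by
          rcases eq_or_lt_of_le (hb i hi) with h0 | h0
          · exfalso; have := hab i hi h0.symm; linarith
          · exact h0
        have hy : (0:ℝ) < b i * A / B := by positivity
        have := my_sub_le_mul_log (le_of_lt hai) (le_of_lt hy) (fun h0 => by linarith)
        have heq : Real.log (a i / (b i * A / B)) =
            Real.log (a i / b i) - (Real.log A - Real.log B) := by
          rw [Real.log_div (ne_of_gt hai) (ne_of_gt hy),
              Real.log_div (ne_of_gt hai) (ne_of_gt hbi),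
              Real.log_div (by positivity) (ne_of_gt hBpos),
              Real.log_mul (ne_of_gt hbi) (ne_of_gt hApos)]
          ring
        calc a i - b i * A / B ≤ a i * Real.log (a i / (b i * A / B)) := this
        _ = a i * Real.log (a i / b i) - a i * (Real.log A - Real.log B) := by rw [heq]; ring
    have hsum := Finset.sum_le_sum key
    have h1 : ∑ i ∈ s, b i * A / B = A := by
      rw [← Finset.sum_div, ← Finset.sum_mul, ← hB]
      field_simp
    have h2 : ∑ i ∈ s, (a i * Real.log (a i / b i) - a i * (Real.log A - Real.log B)) =
        (∑ i ∈ s, a i * Real.log (a i / b i)) - A * (Real.log A - Real.log B) := by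
      rw [Finset.sum_sub_distrib, ← Finset.sum_mul, ← hA]
    rw [h2, Finset.sum_sub_distrib, h1, ← hA] at hsum
    rw [Real.log_div (ne_of_gt hApos) (ne_of_gt hBpos)]
    linarith

end myaux

variable {α β γ : Type*} [Fintype α] [Fintype β] [Fintype γ]

noncomputable def m1 (p : α → β → γ → ℝ) (a : α) : ℝ := ∑ b, ∑ c, p a b c
noncomputable def m2 (p : α → β → γ → ℝ) (b : β) : ℝ := ∑ a, ∑ c, p a b c
noncomputable def m3 (p : α → β → γ → ℝ) (c : γ) : ℝ := ∑ a, ∑ b, p a b c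
noncomputable def m12 (p : α → β → γ → ℝ) (a : α) (b : β) : ℝ := ∑ c, p a b c
noncomputable def m13 (p : α → β → γ → ℝ) (a : α) (c : γ) : ℝ := ∑ b, p a b c
noncomputable def m23 (p : α → β → γ → ℝ) (b : β) (c : γ) : ℝ := ∑ a, p a b c

/-- Mutual information between the first and second variables. -/
noncomputable def mi12 (p : α → β → γ → ℝ) : ℝ :=
  ∑ a, ∑ b, m12 p a b * Real.log (m12 p a b / (m1 p a * m2 p b))

/-- Mutual information between the first and third variables. -/
noncomputable def mi13 (p : α → β → γ → ℝ) : ℝ :=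
  ∑ a, ∑ c, m13 p a c * Real.log (m13 p a c / (m1 p a * m3 p c))

/-- Conditional mutual information between the first and second variables given the third. -/
noncomputable def cmi12_3 (p : α → β → γ → ℝ) : ℝ :=
  ∑ a, ∑ b, ∑ c, p a b c * Real.log (p a b c * m3 p c / (m13 p a c * m23 p b c))

/-- Conditional mutual information between the first and third variables given the second. -/
noncomputable def cmi13_2 (p : α → β → γ → ℝ) : ℝ :=
  ∑ a, ∑ b, ∑ c, p a b c * Real.log (p a b c * m2 p b / (m12 p a b * m23 p b c))

variable {ζ : Type*} [Fintype ζ] [DecidableEq ζ]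

/-- Marginal pmf of `Z = f(G*)`, where the joint pmf `p` is over `(G, G*, Y)`. -/
noncomputable def pZ (p : α → β → γ → ℝ) (f : β → ζ) (z : ζ) : ℝ :=
  ∑ g, ∑ s, ∑ y, if f s = z then p g s y else 0

/-- Joint pmf of `(Z, G)` where `Z = f(G*)`. -/
noncomputable def pZG (p : α → β → γ → ℝ) (f : β → ζ) (z : ζ) (g : α) : ℝ :=
  ∑ s, ∑ y, if f s = z then p g s y else 0

/-- Joint pmf of `(Z, Y)` where `Z = f(G*)`. -/
noncomputable def pZY (p : α → β → γ → ℝ) (f : β → ζ) (z : ζ) (y : γ) : ℝ :=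
  ∑ g, ∑ s, if f s = z then p g s y else 0

/-- Mutual information `I(Z;G)` where `Z = f(G*)`. -/
noncomputable def miZG (p : α → β → γ → ℝ) (f : β → ζ) : ℝ :=
  ∑ z, ∑ g, pZG p f z g * Real.log (pZG p f z g / (pZ p f z * m1 p g))

/-- Mutual information `I(Z;Y)` where `Z = f(G*)`. -/
noncomputable def miZY (p : α → β → γ → ℝ) (f : β → ζ) : ℝ :=
  ∑ z, ∑ y, pZY p f z y * Real.log (pZY p f z y / (pZ p f z * m3 p y))

/-- For discrete random variables `G, G*, Y` with joint pmf `p` (roles: G = first,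
G* = second, Y = third) and `Z = f(G*)`, `I(Z;G) − I(G;G*) ≤ I(Z;Y)`; hence
maximizing `I(Z;G)` while minimizing `I(G;G*)` yields a lower bound on `I(Z;Y)`. -/
theorem stmt11 (p : α → β → γ → ℝ) (f : β → ζ)
    (hp : ∀ g s y, 0 ≤ p g s y) (hsum : ∑ g, ∑ s, ∑ y, p g s y = 1) :
    miZG p f - mi12 p ≤ miZY p f := by
  -- basic nonnegativity
  have hm12nn : ∀ g s, 0 ≤ m12 p g s := fun g s => Finset.sum_nonneg fun y _ => hp g s y
  have hm1eq : ∀ g, m1 p g = ∑ s, m12 p g s := fun g => rfl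
  have hm2eq : ∀ s, m2 p s = ∑ g, m12 p g s := fun s => rfl
  have hm1nn : ∀ g, 0 ≤ m1 p g := fun g => by
    rw [hm1eq]; exact Finset.sum_nonneg fun s _ => hm12nn g s
  have hm2nn : ∀ s, 0 ≤ m2 p s := fun s => by
    rw [hm2eq]; exact Finset.sum_nonneg fun g _ => hm12nn g s
  have hm12le1 : ∀ g s, m12 p g s ≤ m1 p g := fun g s => by
    rw [hm1eq]; exact Finset.single_le_sum (fun s _ => hm12nn g s) (mem_univ s)
  have hm12le2 : ∀ g s, m12 p g s ≤ m2 p s := fun g s => by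
    rw [hm2eq]; exact Finset.single_le_sum (fun g _ => hm12nn g s) (mem_univ g)
  have hm3nn : ∀ y, 0 ≤ m3 p y := fun y =>
    Finset.sum_nonneg fun g _ => Finset.sum_nonneg fun s _ => hp g s y
  -- reformulations
  have hpZGeq : ∀ z g, pZG p f z g = ∑ s, if f s = z then m12 p g s else 0 := by
    intro z g
    exact Finset.sum_congr rfl fun s _ => by split_ifs <;> simp [m12]
  have hpZeq : ∀ z, pZ p f z = ∑ s, if f s = z then m2 p s else 0 := by
    intro z
    rw [pZ, Finset.sum_comm]
    refine Finset.sum_congr rfl fun s _ => ?_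
    split_ifs <;> simp [m2]
  have hpZnn : ∀ z, 0 ≤ pZ p f z := fun z => by
    rw [hpZeq]
    exact Finset.sum_nonneg fun s _ => by split_ifs; exacts [hm2nn s, le_refl _]
  have hpZYnn : ∀ z y, 0 ≤ pZY p f z y := fun z y =>
    Finset.sum_nonneg fun g _ => Finset.sum_nonneg fun s _ => by
      split_ifs; exacts [hp g s y, le_refl _]
  have hm3sumZ : ∀ y, ∑ z, pZY p f z y = m3 p y := by
    intro y
    simp only [pZY, m3]
    rw [Finset.sum_comm]
    refine Finset.sum_congr rfl fun g _ => ?_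
    rw [Finset.sum_comm]
    refine Finset.sum_congr rfl fun s _ => ?_
    simp
  have hpZYle3 : ∀ z y, pZY p f z y ≤ m3 p y := fun z y => by
    rw [← hm3sumZ y]
    exact Finset.single_le_sum (fun z _ => hpZYnn z y) (mem_univ z)
  have hpZsumY : ∀ z, pZ p f z = ∑ y, pZY p f z y := by
    intro z
    rw [pZ]
    calc (∑ g, ∑ s, ∑ y, if f s = z then p g s y else 0)
        = ∑ g, ∑ y, ∑ s, if f s = z then p g s y else 0 :=
          Finset.sum_congr rfl fun g _ => Finset.sum_comm
      _ = ∑ y, ∑ g, ∑ s, if f s = z then p g s y else 0 := Finset.sum_comm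
      _ = ∑ y, pZY p f z y := rfl
  have hpZYlepZ : ∀ z y, pZY p f z y ≤ pZ p f z := fun z y => by
    rw [hpZsumY z]
    exact Finset.single_le_sum (fun y _ => hpZYnn z y) (mem_univ y)
  have hsum2 : ∑ s, m2 p s = 1 := by
    rw [← hsum]; exact Finset.sum_comm
  have hsumpZ : ∑ z, pZ p f z = 1 := by
    calc ∑ z, pZ p f z = ∑ z, ∑ s, if f s = z then m2 p s else 0 :=
          Finset.sum_congr rfl fun z _ => hpZeq z
      _ = ∑ s, ∑ z, if f s = z then m2 p s else 0 := Finset.sum_comm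
      _ = ∑ s, m2 p s := Finset.sum_congr rfl fun s _ => by simp
      _ = 1 := hsum2
  have hsum3 : ∑ y, m3 p y = 1 := by
    rw [← hsum]
    calc (∑ y, ∑ g, ∑ s, p g s y)
        = ∑ g, ∑ y, ∑ s, p g s y := Finset.sum_comm
      _ = ∑ g, ∑ s, ∑ y, p g s y :=
          Finset.sum_congr rfl fun g _ => Finset.sum_comm
  -- Step 1 : 0 ≤ miZY
  have step1 : 0 ≤ miZY p f := by
    have key := my_log_sum (univ : Finset (ζ × γ))
      (fun w => pZY p f w.1 w.2) (fun w => pZ p f w.1 * m3 p w.2)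
      (fun w _ => hpZYnn w.1 w.2)
      (fun w _ => mul_nonneg (hpZnn w.1) (hm3nn w.2))
      (fun w _ h0 => by
        rcases mul_eq_zero.mp h0 with h | h
        · exact le_antisymm (h ▸ hpZYlepZ w.1 w.2) (hpZYnn w.1 w.2)
        · exact le_antisymm (h ▸ hpZYle3 w.1 w.2) (hpZYnn w.1 w.2))
    have hA : ∑ w : ζ × γ, pZY p f w.1 w.2 = 1 := by
      rw [Fintype.sum_prod_type]
      calc (∑ z, ∑ y, pZY p f z y) = ∑ y, ∑ z, pZY p f z y := Finset.sum_comm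
        _ = ∑ y, m3 p y := Finset.sum_congr rfl fun y _ => hm3sumZ y
        _ = 1 := hsum3
    have hB : ∑ w : ζ × γ, pZ p f w.1 * m3 p w.2 = 1 := by
      rw [Fintype.sum_prod_type]
      simp only [← Finset.mul_sum, ← Finset.sum_mul, hsum3, hsumpZ, mul_one]
    rw [hA, hB] at key
    simpa [miZY, Fintype.sum_prod_type] using key
  -- Step 2 : miZG ≤ mi12
  have step2 : miZG p f ≤ mi12 p := by
    have pointwise : ∀ z g,
        pZG p f z g * Real.log (pZG p f z g / (pZ p f z * m1 p g)) ≤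
          ∑ s, (if f s = z then
            m12 p g s * Real.log (m12 p g s / (m1 p g * m2 p s)) else 0) := by
      intro z g
      have key := my_log_sum (univ : Finset β)
        (fun s => if f s = z then m12 p g s else 0)
        (fun s => if f s = z then m1 p g * m2 p s else 0)
        (fun s _ => by split_ifs; exacts [hm12nn g s, le_refl _])
        (fun s _ => by split_ifs; exacts [mul_nonneg (hm1nn g) (hm2nn s), le_refl _])
        (fun s _ h0 => by
          split_ifs at h0 ⊢ with h
          · rcases mul_eq_zero.mp h0 with h1 | h1
            · exact le_antisymm (h1 ▸ hm12le1 g s) (hm12nn g s)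
            · exact le_antisymm (h1 ▸ hm12le2 g s) (hm12nn g s)
          · rfl)
      have hA : (∑ s, if f s = z then m12 p g s else 0) = pZG p f z g := (hpZGeq z g).symm
      have hB : (∑ s, if f s = z then m1 p g * m2 p s else 0) = pZ p f z * m1 p g := by
        rw [hpZeq z, Finset.sum_mul]
        refine Finset.sum_congr rfl fun s _ => ?_
        split_ifs <;> ring
      rw [hA, hB] at key
      refine key.trans_eq (Finset.sum_congr rfl fun s _ => ?_)
      split_ifs with h <;> simp [h]
    calc miZG p f ≤ ∑ z, ∑ g, ∑ s, (if f s = z then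
            m12 p g s * Real.log (m12 p g s / (m1 p g * m2 p s)) else 0) :=
          Finset.sum_le_sum fun z _ => Finset.sum_le_sum fun g _ => pointwise z g
      _ = ∑ g, ∑ z, ∑ s, (if f s = z then
            m12 p g s * Real.log (m12 p g s / (m1 p g * m2 p s)) else 0) :=
          Finset.sum_comm
      _ = ∑ g, ∑ s, ∑ z, (if f s = z then
            m12 p g s * Real.log (m12 p g s / (m1 p g * m2 p s)) else 0) :=
          Finset.sum_congr rfl fun g _ => Finset.sum_comm
      _ = mi12 p := Finset.sum_congr rfl fun g _ => Finset.sum_congr rfl fun s _ => by simp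
  linarith
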